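/- arXiv:2602.09575 — 3 statements merged into one kernel-verified Lean document; each statement's English description precedes it below -/
import Mathlib

section
/- Fast-forwarding representation of a dissipative semigroup: Let L ∈ M_n(ℂ) be Hermitian positive semidefinite with positive semidefinite square root L^{1/2}, and let t ≥ 0. Then exp(−t L) = (1/(2√π)) ∫_{−∞}^{+∞} e^{−η²/4} exp(−i η √t · L^{1/2}) dη, where the integral is a Bochner integral of a matrix-valued function over ℝ. -/
open Matrix MeasureTheory NormedSpace
open scoped Matrix.Norms.L2Operator ComplexOrder

/-- The positive semidefinite square root of a positive semidefinite matrix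
(the definition `Matrix.PosSemidef.sqrt` of the older Mathlib, restated verbatim). -/
noncomputable def Matrix.PosSemidef.sqrt {n 𝕜 : Type*} [Fintype n] [DecidableEq n] [RCLike 𝕜]
    {A : Matrix n n 𝕜} (hA : A.PosSemidef) : Matrix n n 𝕜 :=
  hA.1.eigenvectorUnitary.1 * diagonal ((↑) ∘ (Real.sqrt ∘ hA.1.eigenvalues)) *
  (star hA.1.eigenvectorUnitary : Matrix n n 𝕜)

lemma Matrix.PosSemidef.posSemidef_sqrt {n 𝕜 : Type*} [Fintype n] [DecidableEq n] [RCLike 𝕜]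
    {A : Matrix n n 𝕜} (hA : A.PosSemidef) : hA.sqrt.PosSemidef := by
  unfold Matrix.PosSemidef.sqrt
  refine (show (diagonal ((↑) ∘ (Real.sqrt ∘ hA.1.eigenvalues)) : Matrix n n 𝕜).PosSemidef from
    posSemidef_diagonal_iff.mpr fun i => ?_).mul_mul_conjTranspose_same _
  simp only [Function.comp_apply]
  exact RCLike.ofReal_nonneg.mpr (Real.sqrt_nonneg _)

lemma Matrix.PosSemidef.sqrt_mul_self {n 𝕜 : Type*} [Fintype n] [DecidableEq n] [RCLike 𝕜]
    {A : Matrix n n 𝕜} (hA : A.PosSemidef) : hA.sqrt * hA.sqrt = A := by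
  have hUU : star (hA.1.eigenvectorUnitary : Matrix n n 𝕜) * hA.1.eigenvectorUnitary = 1 :=
    Matrix.mem_unitaryGroup_iff'.mp hA.1.eigenvectorUnitary.2
  have h := hA.1.spectral_theorem
  rw [Unitary.conjStarAlgAut_apply] at h
  unfold Matrix.PosSemidef.sqrt
  calc _ = (hA.1.eigenvectorUnitary : Matrix n n 𝕜) *
        (diagonal ((↑) ∘ (Real.sqrt ∘ hA.1.eigenvalues)) *
          (star (hA.1.eigenvectorUnitary : Matrix n n 𝕜) *
            (hA.1.eigenvectorUnitary : Matrix n n 𝕜)) *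
          diagonal ((↑) ∘ (Real.sqrt ∘ hA.1.eigenvalues))) *
        star (hA.1.eigenvectorUnitary : Matrix n n 𝕜) := by
          simp only [Matrix.mul_assoc]
    _ = (hA.1.eigenvectorUnitary : Matrix n n 𝕜) * diagonal (RCLike.ofReal ∘ hA.1.eigenvalues) *
        star (hA.1.eigenvectorUnitary : Matrix n n 𝕜) := by
          rw [hUU, Matrix.mul_one, diagonal_mul_diagonal]
          refine congrArg (fun d => _ * diagonal d * _) (funext fun i => ?_)
          simp only [Function.comp_apply]
          rw [← RCLike.ofReal_mul, Real.mul_self_sqrt (hA.eigenvalues_nonneg i)]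
    _ = A := h.symm

lemma diagonal_eq_sum_smul_aux {n : ℕ} (v : Fin n → ℂ) :
    diagonal v = ∑ i, v i • single i i (1 : ℂ) := by
  ext i j
  rw [Matrix.sum_apply]
  by_cases h : i = j
  · subst h
    simp [Matrix.single, diagonal_apply_eq, Finset.sum_ite_eq, eq_comm]
  · simp [Matrix.single, diagonal_apply_ne _ h, fun k => (show ¬(k = i ∧ k = j) by
      rintro ⟨rfl, rfl⟩; exact h rfl)]

lemma sqrt_four' : Real.sqrt (4 * Real.pi) = 2 * Real.sqrt Real.pi := by
  rw [show (4 : ℝ) * Real.pi = (2 * Real.sqrt Real.pi) ^ 2 by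
    rw [mul_pow, Real.sq_sqrt Real.pi_pos.le]; norm_num]
  exact Real.sqrt_sq (by positivity)

/-- **Fast-forwarding representation of a dissipative semigroup.**
For a Hermitian positive semidefinite `L` with positive semidefinite square root
`L^{1/2}` and `t ≥ 0`,
`exp (-t L) = (1/(2√π)) ∫ e^{-η²/4} exp (-i η √t L^{1/2}) dη` (Bochner integral). -/
theorem fast_forwarding_dissipative {n : ℕ}
    (L : Matrix (Fin n) (Fin n) ℂ) (hL : L.PosSemidef) (t : ℝ) (ht : 0 ≤ t) :
    exp (-(t • L))
      = (1 / (2 * Real.sqrt Real.pi)) •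
        ∫ η : ℝ, Real.exp (-(η ^ 2 / 4)) •
          exp (-((Complex.I * η * Real.sqrt t) • hL.sqrt)) := by
  have hS : hL.sqrt.PosSemidef := hL.posSemidef_sqrt
  have hH : hL.sqrt.IsHermitian := hS.1
  set U : Matrix (Fin n) (Fin n) ℂ := (hH.eigenvectorUnitary : Matrix (Fin n) (Fin n) ℂ)
    with hUdef
  set ev : Fin n → ℝ := hH.eigenvalues with hevdef
  have hUU : star U * U = 1 := Matrix.mem_unitaryGroup_iff'.mp hH.eigenvectorUnitary.2
  have hUU' : U * star U = 1 := Matrix.mem_unitaryGroup_iff.mp hH.eigenvectorUnitary.2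
  have hUunit : IsUnit U := by
    haveI := invertibleOfRightInverse U (star U) hUU'
    exact isUnit_of_invertible U
  have hUinv : U⁻¹ = star U := Matrix.inv_eq_left_inv hUU
  have hspec : hL.sqrt = U * diagonal (fun i => (ev i : ℂ)) * star U := by
    have h := hH.spectral_theorem
    rw [Unitary.conjStarAlgAut_apply] at h
    exact h
  set B : Fin n → Matrix (Fin n) (Fin n) ℂ :=
    fun i => U * single i i (1 : ℂ) * star U with hBdef
  have conj_diag : ∀ v : Fin n → ℂ, U * diagonal v * star U = ∑ i, v i • B i := by
    intro v
    rw [diagonal_eq_sum_smul_aux, Finset.mul_sum, Finset.sum_mul]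
    simp only [Matrix.mul_smul, Matrix.smul_mul, hBdef]
  have exp_conj_diag : ∀ v : Fin n → ℂ,
      exp (U * diagonal v * star U) = ∑ i, Complex.exp (v i) • B i := by
    intro v
    rw [← hUinv, Matrix.exp_conj U (diagonal v) hUunit, Matrix.exp_diagonal, hUinv, conj_diag]
    congr 1; funext i; congr 1
    rw [Pi.exp_def]; exact congrFun Complex.exp_eq_exp_ℂ.symm (v i)
  -- conjugate form for scalar multiples
  have conj_smul : ∀ (z : ℂ) (w : Fin n → ℂ),
      -(z • (U * diagonal w * star U)) = U * diagonal (fun i => -(z * w i)) * star U := by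
    intro z w
    have h1 : (fun i => -(z * w i)) = (-z) • w := by
      funext i
      simp [smul_eq_mul]
    rw [h1, diagonal_smul, Matrix.mul_smul, Matrix.smul_mul, neg_smul]
  have smul_sqrt : ∀ z : ℂ, -(z • hL.sqrt) = U * diagonal (fun i => -(z * ev i)) * star U := by
    intro z
    rw [hspec, conj_smul]
  -- LHS as a sum
  have hLconj : -(t • L) = U * diagonal (fun i => -((t : ℂ) * (ev i * ev i))) * star U := by
    have hLsq : L = U * diagonal (fun i => (ev i : ℂ) * ev i) * star U := by
      rw [← hL.sqrt_mul_self, hspec]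
      rw [Matrix.mul_assoc (U * diagonal _) (star U),
        ← Matrix.mul_assoc (star U) (U * diagonal _) (star U),
        ← Matrix.mul_assoc (star U) U (diagonal _), hUU, Matrix.one_mul,
        ← Matrix.mul_assoc (U * diagonal _) (diagonal _) (star U),
        Matrix.mul_assoc U (diagonal _) (diagonal _), diagonal_mul_diagonal]
    have hre : t • (U * diagonal (fun i => (ev i : ℂ) * ev i) * star U)
        = (t : ℂ) • (U * diagonal (fun i => (ev i : ℂ) * ev i) * star U) := by
      ext i j
      simp [Complex.real_smul]
    rw [hLsq, hre, conj_smul]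
  have hlhs : exp (-(t • L)) = ∑ i, Complex.exp (-((t : ℂ) * (ev i * ev i))) • B i := by
    rw [hLconj, exp_conj_diag]
  -- the scalar integrands
  set c : Fin n → ℂ := fun i => -(Complex.I * Real.sqrt t * ev i) with hcdef
  set g : Fin n → ℝ → ℂ :=
    fun i η => Complex.exp (-(1/4 : ℂ) * η ^ 2 + c i * η + 0) with hgdef
  have hb : (-(1/4 : ℂ)).re < 0 := by norm_num
  have hint : ∀ i, Integrable (g i) := by
    intro i
    have := integrable_cexp_quadratic (b := (1/4 : ℂ)) (by norm_num) (c i) 0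
    simpa [hgdef, neg_mul] using this
  -- pointwise identification of the integrand
  have hpt : ∀ η : ℝ,
      Real.exp (-(η ^ 2 / 4)) • exp (-((Complex.I * η * Real.sqrt t) • hL.sqrt))
        = ∑ i, g i η • B i := by
    intro η
    rw [smul_sqrt, exp_conj_diag, Finset.smul_sum]
    congr 1; funext i
    rw [← smul_assoc]
    congr 1
    show (Real.exp (-(η ^ 2 / 4)) : ℂ) * Complex.exp (-(Complex.I * η * Real.sqrt t * ev i))
      = g i η
    rw [hgdef]
    simp only [Complex.ofReal_exp, ← Complex.exp_add]
    congr 1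
    push_cast
    ring
  -- compute each scalar integral
  have hval : ∀ i, ∫ η : ℝ, g i η
      = ((2 * Real.sqrt Real.pi : ℝ) : ℂ) * Complex.exp (-((t : ℂ) * (ev i * ev i))) := by
    intro i
    rw [hgdef]
    simp only
    rw [integral_cexp_quadratic hb (c i) 0]
    congr 1
    · rw [show ((Real.pi : ℂ) / -(-(1/4 : ℂ))) = ((4 * Real.pi : ℝ) : ℂ) by push_cast; ring,
        show (1/2 : ℂ) = ((1/2 : ℝ) : ℂ) by norm_num,
        ← Complex.ofReal_cpow (by positivity)]
      norm_cast
      rw [← Real.sqrt_eq_rpow, sqrt_four']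
    · congr 1
      rw [show (0 : ℂ) - c i ^ 2 / (4 * -(1/4 : ℂ)) = c i ^ 2 by ring]
      rw [hcdef]
      show (-(Complex.I * (Real.sqrt t : ℂ) * (ev i : ℂ))) ^ 2 = _
      rw [show (-(Complex.I * (Real.sqrt t : ℂ) * (ev i : ℂ))) ^ 2
          = Complex.I ^ 2 * ((Real.sqrt t : ℂ)) ^ 2 * ((ev i : ℂ) * ev i) by ring,
        Complex.I_sq, ← Complex.ofReal_pow, Real.sq_sqrt ht]
      ring
  -- put it together
  rw [hlhs]
  simp only [hpt]
  rw [integral_finset_sum _ (fun i _ => (hint i).smul_const (B i))]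
  rw [Finset.smul_sum]
  congr 1; funext i
  rw [integral_smul_const, hval i, ← smul_assoc]
  congr 1
  have h2 : ((1 / (2 * Real.sqrt Real.pi) : ℝ) : ℂ) * ((2 * Real.sqrt Real.pi : ℝ) : ℂ) = 1 := by
    rw [← Complex.ofReal_mul,
      one_div_mul_cancel (by positivity : (2 * Real.sqrt Real.pi : ℝ) ≠ 0), Complex.ofReal_one]
  rw [Complex.real_smul, ← mul_assoc ((1 / (2 * Real.sqrt Real.pi) : ℝ) : ℂ), h2, one_mul]
end

section
/- LCHS kernel identity for positive semidefinite generators: Let γ : ℝ → ℂ be Lebesgue integrable and suppose that for every real x ≥ 0, ∫_{−∞}^{+∞} γ(η) e^{−iηx} dη = e^{−x}. Then for every Hermitian positive semidefinite matrix L ∈ M_n(ℂ) and every t ≥ 0, ∫_{−∞}^{+∞} γ(η) · exp(−i η t L) dη = exp(−t L), where the left side is a Bochner integral of a matrix-valued function over ℝ. -/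
open Matrix MeasureTheory NormedSpace
open scoped Matrix.Norms.L2Operator ComplexOrder

/-- **LCHS kernel identity for positive semidefinite generators.**
If an integrable kernel `γ` satisfies `∫ γ(η) e^{-iηx} dη = e^{-x}` for all `x ≥ 0`,
then for every Hermitian positive semidefinite `L` and `t ≥ 0`,
`∫ γ(η) exp (-i η t L) dη = exp (-t L)` (Bochner integral). -/
theorem LCHS_kernel_identity {n : ℕ}
    (γ : ℝ → ℂ) (hγ : Integrable γ)
    (hker : ∀ x : ℝ, 0 ≤ x →
      (∫ η : ℝ, γ η * Complex.exp (-(Complex.I * η * x))) = Real.exp (-x))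
    (L : Matrix (Fin n) (Fin n) ℂ) (hL : L.PosSemidef) (t : ℝ) (ht : 0 ≤ t) :
    (∫ η : ℝ, γ η • exp (-((Complex.I * η * t) • L))) = exp (-(t • L)) := by
  classical
  have hH := hL.1
  have hUstar : (star (hH.eigenvectorUnitary) : Matrix (Fin n) (Fin n) ℂ)
      = ((Unitary.toUnits hH.eigenvectorUnitary)⁻¹ : (Matrix (Fin n) (Fin n) ℂ)ˣ) := by
    rfl
  set U : Matrix (Fin n) (Fin n) ℂ := (hH.eigenvectorUnitary : Matrix (Fin n) (Fin n) ℂ) with hU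
  set d : Fin n → ℝ := hH.eigenvalues with hd
  -- key: exponential of any complex multiple of L
  have hexp : ∀ c : ℂ, exp (c • L) =
      U * Matrix.diagonal (fun k => Complex.exp (c * (d k))) * star U := by
    intro c
    set u : (Matrix (Fin n) (Fin n) ℂ)ˣ := Unitary.toUnits hH.eigenvectorUnitary with hu
    have hid : L = (u : Matrix (Fin n) (Fin n) ℂ)
        * Matrix.diagonal (RCLike.ofReal ∘ hH.eigenvalues)
        * ((u⁻¹ : (Matrix (Fin n) (Fin n) ℂ)ˣ) : Matrix (Fin n) (Fin n) ℂ) :=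
      hH.spectral_theorem
    have hdiag : exp (c • Matrix.diagonal (RCLike.ofReal ∘ hH.eigenvalues))
        = Matrix.diagonal (fun k => Complex.exp (c * (d k))) := by
      rw [← Matrix.diagonal_smul, Matrix.exp_diagonal]
      have hfun : exp (c • (RCLike.ofReal ∘ hH.eigenvalues) : Fin n → ℂ)
          = fun k => Complex.exp (c * (d k)) := by
        funext k
        rw [Pi.coe_exp, ← Complex.exp_eq_exp_ℂ]
        simp only [Pi.smul_apply, Function.comp_apply, smul_eq_mul]
        rfl
      rw [hfun]
    conv_lhs => rw [hid]
    rw [← smul_mul_assoc, ← mul_smul_comm, Matrix.exp_units_conj, hdiag]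
    rfl
  -- the vector-valued integrand
  set v : ℝ → Fin n → ℂ := fun η k => Complex.exp (-(Complex.I * η * t) * (d k)) with hv
  set g : ℝ → Fin n → ℂ := fun η => γ η • v η with hg
  have hv_cont : Continuous v := by
    apply continuous_pi
    intro k
    fun_prop
  have hv_norm : ∀ η k, ‖v η k‖ = 1 := by
    intro η k
    have hre : (-(Complex.I * (η : ℂ) * (t : ℂ)) * ((d k : ℝ) : ℂ)).re = 0 := by
      simp [Complex.mul_re, Complex.mul_im]
    rw [hv]
    simp only [Complex.norm_exp, hre, Real.exp_zero]
  have hg_int : Integrable g := by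
    refine Integrable.mono' (hγ.norm) ?_ ?_
    · exact (hγ.1.smul (hv_cont.aestronglyMeasurable))
    · filter_upwards with η
      rw [hg]
      simp only [norm_smul]
      have : ‖v η‖ ≤ 1 := by
        rw [pi_norm_le_iff_of_nonneg zero_le_one]
        intro k; rw [hv_norm η k]
      calc ‖γ η‖ * ‖v η‖ ≤ ‖γ η‖ * 1 :=
            mul_le_mul_of_nonneg_left this (norm_nonneg _)
        _ = ‖γ η‖ := mul_one _
  -- the continuous linear map assembling the result from the vector of diagonal entries
  let Δ : (Fin n → ℂ) →ₗ[ℂ] Matrix (Fin n) (Fin n) ℂ :=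
    (LinearMap.mulRight ℂ (star U)).comp
      ((LinearMap.mulLeft ℂ U).comp (Matrix.diagonalLinearMap (Fin n) ℂ ℂ))
  let Ψ : (Fin n → ℂ) →L[ℂ] Matrix (Fin n) (Fin n) ℂ := LinearMap.toContinuousLinearMap Δ
  have hΨ : ∀ w, Ψ w = U * Matrix.diagonal w * star U := fun w => rfl
  -- rewrite the integrand
  have h1 : (∫ η : ℝ, γ η • exp (-((Complex.I * η * t) • L))) = ∫ η : ℝ, Ψ (g η) := by
    congr 1
    funext η
    rw [← neg_smul, hexp, hg]
    rw [_root_.map_smul, hΨ]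
  rw [h1, ContinuousLinearMap.integral_comp_comm Ψ hg_int]
  -- compute the integral coordinatewise
  have h2 : (∫ η, g η) = fun k => (Real.exp (-(t * d k)) : ℂ) := by
    funext k
    have hproj := ContinuousLinearMap.integral_comp_comm
      (ContinuousLinearMap.proj (R := ℂ) (φ := fun _ : Fin n => ℂ) k) hg_int
    have hthis : (∫ η, g η) k = ∫ η, g η k := hproj.symm
    rw [hthis]
    have heq : (fun η => g η k)
        = fun η => γ η * Complex.exp (-(Complex.I * η * ((t * d k : ℝ) : ℂ))) := by
      funext η
      rw [hg, hv]
      simp only [Pi.smul_apply, smul_eq_mul]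
      congr 1
      congr 1
      push_cast
      ring
    rw [heq, hker (t * d k) (mul_nonneg ht (hL.eigenvalues_nonneg k))]
  rw [h2]
  -- identify the right-hand side
  have h3 : -(t • L) = ((-t : ℝ) : ℂ) • L := by
    ext i j
    simp [Matrix.smul_apply, Complex.real_smul]
  rw [h3, hexp, hΨ]
  have h4 : (fun k => (Real.exp (-(t * d k)) : ℂ))
      = fun k => Complex.exp (((-t : ℝ) : ℂ) * ((d k : ℝ) : ℂ)) := by
    funext k
    rw [show ((-t : ℝ) : ℂ) * ((d k : ℝ) : ℂ) = ((-(t * d k) : ℝ) : ℂ) by push_cast; ring,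
      Complex.ofReal_exp]
  rw [h4]
end

section
/- Non-optimality of LCHS (impossibility of compactly supported kernels): There is no function γ : ℝ → ℂ that is square integrable and has compact support and satisfies ∫_{−∞}^{+∞} γ(η) e^{−iηx} dη = e^{−x} for every real x ≥ 0. -/
open MeasureTheory

open Filter Complex Set in
private lemma my_integral_cexp_Ioi (c : ℂ) (hc : 0 < c.re) :
    ∫ x in Set.Ioi (0:ℝ), Complex.exp (-(c * x)) = c⁻¹ := by
  have hderiv : ∀ x ∈ Set.Ici (0:ℝ),
      HasDerivAt (fun x : ℝ => -c⁻¹ * Complex.exp (-(c * x))) (Complex.exp (-(c * x))) x := by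
    intro x _
    have h1 : HasDerivAt (fun x : ℝ => -(c * x)) (-c) x := by
      simpa using (((hasDerivAt_id x).ofReal_comp).const_mul c).fun_neg
    have h2 := (Complex.hasDerivAt_exp (-(c * x))).comp x h1
    have h3 := h2.const_mul (-c⁻¹)
    refine h3.congr_deriv ?_
    have hc0 : c ≠ 0 := fun h => by simp [h] at hc
    field_simp
  have hint : IntegrableOn (fun x : ℝ => Complex.exp (-(c * x))) (Set.Ioi 0) := by
    apply Integrable.mono' (exp_neg_integrableOn_Ioi 0 hc)
    · exact (Complex.continuous_exp.comp (by fun_prop)).aestronglyMeasurable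
    · filter_upwards with x
      simp [Complex.norm_exp, mul_comm]
  have htends : Tendsto (fun x : ℝ => -c⁻¹ * Complex.exp (-(c * x))) atTop (nhds 0) := by
    rw [tendsto_zero_iff_norm_tendsto_zero]
    have heq : (fun x : ℝ => ‖-c⁻¹ * Complex.exp (-(c * x))‖)
        = fun x : ℝ => ‖c⁻¹‖ * Real.exp (-(c.re * x)) := by
      ext x; simp [Complex.norm_exp]
    rw [heq]
    have h1 : Tendsto (fun x : ℝ => -(c.re * x)) atTop atBot :=
      tendsto_neg_atTop_atBot.comp (Tendsto.const_mul_atTop hc tendsto_id)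
    have := Real.tendsto_exp_atBot.comp h1
    simpa using this.const_mul ‖c⁻¹‖
  rw [integral_Ioi_of_hasDerivAt_of_tendsto' hderiv hint htends]
  simp

open Filter Complex Set Metric in
/-- **Non-optimality of LCHS: no compactly supported square-integrable kernel.**
There is no `γ ∈ L²(ℝ, ℂ)` with compact support such that
`∫ γ(η) e^{-iηx} dη = e^{-x}` for every `x ≥ 0`. -/
theorem no_compact_LCHS_kernel :
    ¬ ∃ γ : ℝ → ℂ, MemLp γ 2 (volume : Measure ℝ) ∧ HasCompactSupport γ ∧
      ∀ x : ℝ, 0 ≤ x →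
        (∫ η : ℝ, γ η * Complex.exp (-(Complex.I * η * x))) = Real.exp (-x) := by
  rintro ⟨γ, hγ2, hγc, hF⟩
  have hmeas : AEStronglyMeasurable γ volume := hγ2.aestronglyMeasurable
  -- γ is integrable
  have hInt : Integrable γ := by
    rw [← memLp_one_iff_integrable]
    exact hγ2.mono_exponent_of_measure_support_ne_top
      (fun x hx => image_eq_zero_of_notMem_tsupport hx) hγc.measure_lt_top.ne (by norm_num)
  -- support radius
  obtain ⟨R', hR'⟩ := hγc.isBounded.subset_closedBall 0
  set R : ℝ := max R' 0 with hRdef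
  have hsupp_abs : ∀ η : ℝ, γ η ≠ 0 → |η| ≤ R := by
    intro η h
    have : η ∈ Metric.closedBall (0:ℝ) R' := hR' (subset_tsupport γ h)
    simp only [Metric.mem_closedBall, Real.dist_eq, sub_zero] at this
    exact this.trans (le_max_left _ _)
  -- the function g
  set g : ℂ → ℂ := fun s => ∫ η : ℝ, γ η * (s + Complex.I * η)⁻¹ with hgdef
  -- measurability of integrands
  have hm1 : ∀ s : ℂ, AEStronglyMeasurable (fun η : ℝ => γ η * (s + Complex.I * η)⁻¹) volume := by
    intro s
    exact hmeas.mul ((measurable_const.add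
      (Complex.measurable_ofReal.const_mul Complex.I)).inv).aestronglyMeasurable
  -- Step A: for real s > 0, g s = (s+1)⁻¹
  have key : ∀ s : ℝ, 0 < s → g s = ((s : ℂ) + 1)⁻¹ := by
    intro s hs
    have hre : ∀ η : ℝ, ((s : ℂ) + Complex.I * η).re = s := by intro η; simp
    have h1 : ((s : ℂ) + 1)⁻¹ = ∫ x in Set.Ioi (0:ℝ), Complex.exp (-(((s:ℂ) + 1) * x)) := by
      rw [my_integral_cexp_Ioi _ (by simp; linarith)]
    have h2 : ∀ x ∈ Set.Ioi (0:ℝ), Complex.exp (-(((s:ℂ) + 1) * x))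
        = ∫ η : ℝ, γ η * Complex.exp (-(((s:ℂ) + Complex.I * η) * x)) := by
      intro x hx
      have hx0 : (0:ℝ) ≤ x := le_of_lt hx
      calc Complex.exp (-(((s:ℂ) + 1) * x))
          = Complex.exp (-((s:ℂ) * x)) * ((Real.exp (-x) : ℝ) : ℂ) := by
            rw [Complex.ofReal_exp, ← Complex.exp_add]
            congr 1
            push_cast
            ring
        _ = Complex.exp (-((s:ℂ) * x))
              * ∫ η : ℝ, γ η * Complex.exp (-(Complex.I * η * x)) := by rw [hF x hx0]
        _ = ∫ η : ℝ, Complex.exp (-((s:ℂ) * x))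
              * (γ η * Complex.exp (-(Complex.I * η * x))) := by
            rw [MeasureTheory.integral_const_mul]
        _ = ∫ η : ℝ, γ η * Complex.exp (-(((s:ℂ) + Complex.I * η) * x)) := by
            refine integral_congr_ae (Filter.Eventually.of_forall fun η => ?_)
            dsimp only
            rw [show (-(((s:ℂ) + Complex.I * η) * x))
              = -((s:ℂ) * x) + -(Complex.I * η * x) by ring, Complex.exp_add]
            ring
    have hswap : (∫ x in Set.Ioi (0:ℝ),
          ∫ η : ℝ, γ η * Complex.exp (-(((s:ℂ) + Complex.I * η) * x)))
        = ∫ η : ℝ, ∫ x in Set.Ioi (0:ℝ),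
            γ η * Complex.exp (-(((s:ℂ) + Complex.I * η) * x)) := by
      apply MeasureTheory.integral_integral_swap
      apply Integrable.mono'
        (g := fun p : ℝ × ℝ => Real.exp (-(s * p.1)) * ‖γ p.2‖)
      · exact Integrable.mul_prod
          (by simpa [neg_mul] using (exp_neg_integrableOn_Ioi 0 hs).integrable) hInt.norm
      · refine AEStronglyMeasurable.mul ?_ ?_
        · exact hmeas.comp_snd
        · exact (Complex.continuous_exp.comp (by fun_prop)).aestronglyMeasurable
      · filter_upwards with p
        have hre2 : (-(((s:ℂ) + Complex.I * p.2) * p.1)).re = -(s * p.1) := by simp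
        simp only [Function.uncurry, norm_mul, Complex.norm_exp, hre2]
        rw [mul_comm]
    have h3 : ∀ η : ℝ, (∫ x in Set.Ioi (0:ℝ),
          γ η * Complex.exp (-(((s:ℂ) + Complex.I * η) * x)))
        = γ η * ((s:ℂ) + Complex.I * η)⁻¹ := by
      intro η
      rw [MeasureTheory.integral_const_mul, my_integral_cexp_Ioi _ (by rw [hre]; exact hs)]
    rw [hgdef]
    simp only
    rw [h1, MeasureTheory.setIntegral_congr_fun measurableSet_Ioi h2, hswap]
    exact integral_congr_ae (Filter.Eventually.of_forall fun η => (h3 η).symm)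
  -- the open connected set U
  set U : Set ℂ := {z | 0 < z.re} ∪ ({z | R < z.im} ∪ {z | z.re < 0}) with hUdef
  have hUopen : IsOpen U :=
    (isOpen_lt continuous_const Complex.continuous_re).union
      ((isOpen_lt continuous_const Complex.continuous_im).union
        (isOpen_lt Complex.continuous_re continuous_const))
  have hUconn : IsPreconnected U := by
    have hA := (convex_halfSpace_re_gt (0:ℝ)).isPreconnected
    have hB := (convex_halfSpace_im_gt R).isPreconnected
    have hC := (convex_halfSpace_re_lt (0:ℝ)).isPreconnected
    have hBC : IsPreconnected ({z : ℂ | R < z.im} ∪ {z : ℂ | z.re < 0}) := by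
      refine IsPreconnected.union (-1 + (R + 1) * Complex.I) ?_ ?_ hB hC
      · simp
      · simp
    refine IsPreconnected.union (1 + (R + 1) * Complex.I) ?_ ?_ hA hBC
    · simp
    · left; simp
  -- lower bound on |s + iη| near points of U
  have hlb : ∀ s₀ ∈ U, ∃ m > 0, ∀ η : ℝ, |η| ≤ R → m ≤ ‖s₀ + Complex.I * η‖ := by
    intro s₀ hs₀
    rcases hs₀ with h | h | h
    · refine ⟨s₀.re, h, fun η _ => ?_⟩
      have hre2 : (s₀ + Complex.I * (η:ℂ)).re = s₀.re := by simp
      calc s₀.re ≤ |(s₀ + Complex.I * η).re| := by rw [hre2]; exact le_abs_self _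
        _ ≤ ‖_‖ := Complex.abs_re_le_norm _
    · simp only [Set.mem_setOf_eq] at h
      refine ⟨s₀.im - R, by linarith, fun η hη => ?_⟩
      have him : (s₀ + Complex.I * (η:ℂ)).im = s₀.im + η := by simp
      calc s₀.im - R ≤ s₀.im + η := by
            have := abs_le.mp hη
            linarith [this.1]
        _ ≤ |(s₀ + Complex.I * η).im| := by rw [him]; exact le_abs_self _
        _ ≤ ‖_‖ := Complex.abs_im_le_norm _
    · simp only [Set.mem_setOf_eq] at h
      refine ⟨-s₀.re, by linarith, fun η _ => ?_⟩
      have hre2 : (s₀ + Complex.I * (η:ℂ)).re = s₀.re := by simp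
      calc -s₀.re ≤ |(s₀ + Complex.I * η).re| := by rw [hre2]; exact neg_le_abs _
        _ ≤ ‖_‖ := Complex.abs_re_le_norm _
  -- g is differentiable on U
  have hdiff : DifferentiableOn ℂ g U := by
    intro s₀ hs₀
    obtain ⟨m, hm, hmlb⟩ := hlb s₀ hs₀
    set ε : ℝ := m / 2 with hεdef
    have hε : 0 < ε := by positivity
    have hball : ∀ s ∈ Metric.ball s₀ ε, ∀ η : ℝ, γ η ≠ 0 →
        ε ≤ ‖s + Complex.I * η‖ := by
      intro s hsb η hγη
      have h1 := hmlb η (hsupp_abs η hγη)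
      have h2 : ‖s - s₀‖ < ε := by
        rw [← Complex.dist_eq]; exact hsb
      have h3 : ‖s₀ + Complex.I * η‖ ≤
          ‖s + Complex.I * η‖ + ‖s - s₀‖ := by
        have := norm_add_le (s + Complex.I * η) (s₀ - s)
        calc ‖s₀ + Complex.I * η‖ = ‖s + Complex.I * η + (s₀ - s)‖ := by
              ring_nf
          _ ≤ ‖s + Complex.I * η‖ + ‖s₀ - s‖ := norm_add_le _ _
          _ = ‖s + Complex.I * η‖ + ‖s - s₀‖ := by
              rw [← norm_neg (s₀ - s)]; ring_nf
      have : m ≤ ‖s + Complex.I * η‖ + ε := by linarith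
      have := this
      rw [hεdef] at *
      linarith
    have hderall : ∀ᵐ η : ℝ, ∀ s ∈ Metric.ball s₀ ε,
        HasDerivAt (fun z : ℂ => γ η * (z + Complex.I * η)⁻¹)
          (-(γ η * ((s + Complex.I * η) ^ 2)⁻¹)) s := by
      filter_upwards with η
      intro s hsb
      by_cases hγη : γ η = 0
      · simpa [hγη] using hasDerivAt_const s (0:ℂ)
      · have h0 : s + Complex.I * η ≠ 0 := by
          intro h
          have := hball s hsb η hγη
          rw [h] at this
          simp at this
          linarith
        have hd : HasDerivAt (fun z : ℂ => (z + Complex.I * η)⁻¹)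
            (-1 / (s + Complex.I * η) ^ 2) s := by
          simpa using ((hasDerivAt_id s).add_const (Complex.I * η)).fun_inv h0
        have := hd.const_mul (γ η)
        refine this.congr_deriv ?_
        field_simp
    have hres := hasDerivAt_integral_of_dominated_loc_of_deriv_le
      (F := fun (z : ℂ) (η : ℝ) => γ η * (z + Complex.I * η)⁻¹)
      (F' := fun (z : ℂ) (η : ℝ) => -(γ η * ((z + Complex.I * η) ^ 2)⁻¹))
      (x₀ := s₀) (bound := fun η => ‖γ η‖ * (ε ^ 2)⁻¹) (Metric.ball_mem_nhds s₀ hε)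
      (Filter.Eventually.of_forall fun s => hm1 s)
      ?_ ?_ ?_ ?_ hderall
    · exact (hres.2.differentiableAt).differentiableWithinAt
    · -- Integrable (F s₀)
      apply Integrable.mono' (hInt.norm.mul_const ε⁻¹) (hm1 s₀)
      filter_upwards with η
      by_cases hγη : γ η = 0
      · simp [hγη]
      · rw [norm_mul]
        gcongr
        rw [norm_inv]
        exact inv_anti₀ hε (hball s₀ (Metric.mem_ball_self hε) η hγη)
    · -- measurability of F' s₀
      apply AEStronglyMeasurable.neg
      exact hmeas.mul (((measurable_const.add
        (Complex.measurable_ofReal.const_mul Complex.I)).pow_const 2).inv).aestronglyMeasurable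
    · -- bound
      filter_upwards with η
      intro s hsb
      by_cases hγη : γ η = 0
      · simp [hγη]
      · rw [norm_neg, norm_mul]
        gcongr
        rw [norm_inv, norm_pow]
        apply inv_anti₀ (by positivity)
        have := hball s hsb η hγη
        calc ε ^ 2 ≤ ‖s + Complex.I * η‖ ^ 2 := by gcongr
          _ = _ := rfl
    · exact hInt.norm.mul_const _
  -- identity theorem
  have hgan : AnalyticOnNhd ℂ g U := hdiff.analyticOnNhd hUopen
  have hGan : AnalyticOnNhd ℂ (fun z => (z + 1) * g z - 1) U :=
    ((analyticOnNhd_id.add analyticOnNhd_const).mul hgan).sub analyticOnNhd_const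
  have h1U : (1 : ℂ) ∈ U := by left; simp
  have hfreq : ∃ᶠ z in nhdsWithin (1 : ℂ) {(1:ℂ)}ᶜ, (fun z => (z + 1) * g z - 1) z = 0 := by
    have htend : Filter.Tendsto (fun n : ℕ => ((1 + ((n:ℝ) + 1)⁻¹ : ℝ) : ℂ)) Filter.atTop
        (nhdsWithin (1 : ℂ) {(1:ℂ)}ᶜ) := by
      apply tendsto_nhdsWithin_of_tendsto_nhds_of_eventually_within
      · have hr : Filter.Tendsto (fun n : ℕ => (1 + ((n:ℝ) + 1)⁻¹ : ℝ)) Filter.atTop (nhds 1) := by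
          have := tendsto_one_div_add_atTop_nhds_zero_nat (𝕜 := ℝ)
          simp only [one_div] at this
          simpa using tendsto_const_nhds.add this
        have h2 : Filter.Tendsto (fun n : ℕ => ((1 + ((n:ℝ) + 1)⁻¹ : ℝ) : ℂ)) Filter.atTop
            (nhds ((1:ℝ):ℂ)) := (Complex.continuous_ofReal.tendsto 1).comp hr
        rw [show ((1:ℝ):ℂ) = 1 by norm_num] at h2
        exact h2
      · filter_upwards with n
        simp only [Set.mem_compl_iff, Set.mem_singleton_iff]
        intro h
        have : (1 + ((n:ℝ) + 1)⁻¹ : ℝ) = 1 := by exact_mod_cast h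
        have hpos : (0:ℝ) < ((n:ℝ) + 1)⁻¹ := by positivity
        linarith
    apply htend.frequently
    apply Filter.Frequently.of_forall
    intro n
    set t : ℝ := 1 + ((n:ℝ) + 1)⁻¹ with htdef
    have ht : 0 < t := by positivity
    have := key t ht
    simp only [this]
    have hne : ((t:ℂ) + 1) ≠ 0 := by
      intro h
      have : ((t:ℂ) + 1).re = 0 := by rw [h]; simp
      simp at this
      linarith
    field_simp
    simp
  have hG0 := hGan.eqOn_zero_of_preconnected_of_frequently_eq_zero hUconn h1U hfreq
  have hm1U : (-1 : ℂ) ∈ U := by right; right; simp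
  have := hG0 hm1U
  simp at this
end
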